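/- Let m > 100 be an integer and let S, Z ⊂ Z_m be sets (identifying residues with their representatives in {0,…,m−1}) such that every element of S is at most √m, |S| ≤ √m / 2, and |Z| ≤ √m / 2. Then for every s ∈ S there exist x, y ∈ Z_m ∖ Z such that (1) x + y + s ≡ 0 (mod m), and (2) for all z ∈ Z and all s' ∈ S, x + z + s' ≢ 0 (mod m) and y + z + s' ≢ 0 (mod m). -/

import Mathlib

/-- **Packing lemma for Match3.** Let `m > 100` and let `S, Z ⊂ ℤ/m` be sets
(identifying residues with their representatives in `{0, …, m-1}` via `ZMod.val`)
such that every element of `S` is at most `√m`, `|S| ≤ √m / 2`, and `|Z| ≤ √m / 2`.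
Then for every `s ∈ S` there exist `x, y ∈ ℤ/m ∖ Z` with
(1) `x + y + s ≡ 0 (mod m)`, and
(2) for all `z ∈ Z` and all `s' ∈ S`, `x + z + s' ≢ 0` and `y + z + s' ≢ 0 (mod m)`. -/
theorem match3_packing (m : ℕ) (hm : 100 < m) (S Z : Finset (ZMod m))
    (hS_small : ∀ s ∈ S, (s.val : ℝ) ≤ Real.sqrt m)
    (hS_card : (S.card : ℝ) ≤ Real.sqrt m / 2)
    (hZ_card : (Z.card : ℝ) ≤ Real.sqrt m / 2) :
    ∀ s ∈ S, ∃ x y : ZMod m, x ∉ Z ∧ y ∉ Z ∧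
      x + y + s = 0 ∧
      (∀ z ∈ Z, ∀ s' ∈ S, x + z + s' ≠ 0 ∧ y + z + s' ≠ 0) := by
  intro s hs
  haveI : NeZero m := ⟨by omega⟩
  set B1 : Finset (ZMod m) := Z
  set B2 : Finset (ZMod m) := Z.image (fun z => -s - z)
  set B3 : Finset (ZMod m) := (Z ×ˢ S).image (fun p => -p.1 - p.2)
  set B4 : Finset (ZMod m) := (Z ×ˢ S).image (fun p => -s + p.1 + p.2)
  set B : Finset (ZMod m) := B1 ∪ B2 ∪ B3 ∪ B4 with hB
  have hsqrt_pos : (0:ℝ) < Real.sqrt m := Real.sqrt_pos.2 (by positivity)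
  have hZ0 : (0:ℝ) ≤ Z.card := by positivity
  have hS0 : (0:ℝ) ≤ S.card := by positivity
  have hmul : (Z.card : ℝ) * S.card ≤ m / 4 := by
    have h := mul_le_mul hZ_card hS_card hS0 (by positivity)
    have : Real.sqrt m / 2 * (Real.sqrt m / 2) = m / 4 := by
      rw [div_mul_div_comm, Real.mul_self_sqrt (by positivity)]; norm_num
    linarith
  have hsqlt : Real.sqrt m < m / 2 := by
    have h10 : (10:ℝ) < Real.sqrt m := by
      have : Real.sqrt 100 < Real.sqrt m := by
        apply Real.sqrt_lt_sqrt (by norm_num)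
        exact_mod_cast hm
      simpa [show Real.sqrt 100 = 10 by
        rw [show (100:ℝ) = 10^2 by norm_num, Real.sqrt_sq]; norm_num] using this
    nlinarith [Real.sq_sqrt (show (0:ℝ) ≤ m by positivity)]
  have hBcard : (B.card : ℝ) < m := by
    have h1 : B.card ≤ B1.card + B2.card + B3.card + B4.card := by
      calc B.card ≤ (B1 ∪ B2 ∪ B3).card + B4.card := Finset.card_union_le _ _
        _ ≤ (B1 ∪ B2).card + B3.card + B4.card := by
            have := Finset.card_union_le (B1 ∪ B2) B3; omega
        _ ≤ B1.card + B2.card + B3.card + B4.card := by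
            have := Finset.card_union_le B1 B2; omega
    have h2 : B2.card ≤ Z.card := Finset.card_image_le
    have h3 : B3.card ≤ Z.card * S.card := by
      calc B3.card ≤ (Z ×ˢ S).card := Finset.card_image_le
        _ = Z.card * S.card := Finset.card_product _ _
    have h4 : B4.card ≤ Z.card * S.card := by
      calc B4.card ≤ (Z ×ˢ S).card := Finset.card_image_le
        _ = Z.card * S.card := Finset.card_product _ _
    have hc : (B.card : ℝ) ≤ Z.card + Z.card + Z.card * S.card + Z.card * S.card := by
      have : (B.card : ℝ) ≤ (B1.card : ℝ) + B2.card + B3.card + B4.card := by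
        exact_mod_cast h1
      push_cast at this ⊢
      have h2' : (B2.card : ℝ) ≤ Z.card := by exact_mod_cast h2
      have h3' : (B3.card : ℝ) ≤ (Z.card : ℝ) * S.card := by exact_mod_cast h3
      have h4' : (B4.card : ℝ) ≤ (Z.card : ℝ) * S.card := by exact_mod_cast h4
      linarith
    linarith
  have hcard : B.card < Fintype.card (ZMod m) := by
    rw [ZMod.card]
    exact_mod_cast hBcard
  have hne : Bᶜ.Nonempty := by
    rw [← Finset.card_pos, Finset.card_compl]
    omega
  obtain ⟨x, hx'⟩ := hne
  have hx : x ∉ B := Finset.mem_compl.1 hx'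
  have hx1 : x ∉ B1 := fun h => hx (by simp [hB, h])
  have hx2 : x ∉ B2 := fun h => hx (by simp [hB, h])
  have hx3 : x ∉ B3 := fun h => hx (by simp [hB, h])
  have hx4 : x ∉ B4 := fun h => hx (by simp [hB, h])
  refine ⟨x, -x - s, hx1, ?_, by ring, ?_⟩
  · intro h
    exact hx2 (Finset.mem_image.2 ⟨-x - s, h, by ring⟩)
  · intro z hz s' hs'
    constructor
    · intro h
      apply hx3
      exact Finset.mem_image.2 ⟨(z, s'), Finset.mem_product.2 ⟨hz, hs'⟩, by
        simp only; linear_combination -h⟩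
    · intro h
      apply hx4
      exact Finset.mem_image.2 ⟨(z, s'), Finset.mem_product.2 ⟨hz, hs'⟩, by
        simp only; linear_combination h⟩
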